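/- Node importance-weighted regret equals reward gap: fix x and a conditional distribution over rewards (r_a, r_{a'}) ∈ [0,1]² with E[r_{a'}] ≥ E[r_a]. Then E[(r_{a'} − 1/2)_+ + (1/2 − r_a)_+] − E[(r_a − 1/2)_+ + (1/2 − r_{a'})_+] = E[r_{a'} − r_a] ≥ 0. Hence if a classifier at the node predicts a, its importance-weighted regret equals E[r_{a'} − r_a], and if it predicts a', its regret is 0. -/
import Mathlib


open MeasureTheory

theorem offset_tree_node_regret_identity
    (μ : Measure (ℝ × ℝ)) [IsProbabilityMeasure μ]
    (hr : ∀ᵐ q ∂μ, q.1 ∈ Set.Icc (0:ℝ) 1 ∧ q.2 ∈ Set.Icc (0:ℝ) 1)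
    (hle : ∫ q, q.1 ∂μ ≤ ∫ q, q.2 ∂μ) :
    ((∫ q, (max (q.2 - 1/2) 0 + max (1/2 - q.1) 0) ∂μ)
        - (∫ q, (max (q.1 - 1/2) 0 + max (1/2 - q.2) 0) ∂μ)
      = (∫ q, q.2 ∂μ) - (∫ q, q.1 ∂μ))
    ∧ 0 ≤ (∫ q, q.2 ∂μ) - (∫ q, q.1 ∂μ) := by
  have hc : Integrable (fun _ : ℝ × ℝ => (1:ℝ)) μ := integrable_const 1
  have hF : Integrable (fun q : ℝ × ℝ => max (q.2 - 1/2) 0 + max (1/2 - q.1) 0) μ := by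
    refine hc.mono' ?_ ?_
    · exact (((continuous_snd.sub continuous_const).max continuous_const).add
        ((continuous_const.sub continuous_fst).max continuous_const)).aestronglyMeasurable
    · filter_upwards [hr] with q hq
      obtain ⟨⟨h1, h2⟩, h3, h4⟩ := hq
      rw [Real.norm_eq_abs, abs_of_nonneg (by positivity)]
      have ha : max (q.2 - 1/2) 0 ≤ 1/2 := by apply max_le <;> linarith
      have hb : max (1/2 - q.1) 0 ≤ 1/2 := by apply max_le <;> linarith
      linarith
  have hG : Integrable (fun q : ℝ × ℝ => max (q.1 - 1/2) 0 + max (1/2 - q.2) 0) μ := by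
    refine hc.mono' ?_ ?_
    · exact (((continuous_fst.sub continuous_const).max continuous_const).add
        ((continuous_const.sub continuous_snd).max continuous_const)).aestronglyMeasurable
    · filter_upwards [hr] with q hq
      obtain ⟨⟨h1, h2⟩, h3, h4⟩ := hq
      rw [Real.norm_eq_abs, abs_of_nonneg (by positivity)]
      have ha : max (q.1 - 1/2) 0 ≤ 1/2 := by apply max_le <;> linarith
      have hb : max (1/2 - q.2) 0 ≤ 1/2 := by apply max_le <;> linarith
      linarith
  have h1 : Integrable (fun q : ℝ × ℝ => q.1) μ := by
    refine hc.mono' continuous_fst.aestronglyMeasurable ?_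
    filter_upwards [hr] with q hq
    obtain ⟨⟨ha, hb⟩, _⟩ := hq
    rw [Real.norm_eq_abs, abs_le]; constructor <;> linarith
  have h2 : Integrable (fun q : ℝ × ℝ => q.2) μ := by
    refine hc.mono' continuous_snd.aestronglyMeasurable ?_
    filter_upwards [hr] with q hq
    obtain ⟨_, ha, hb⟩ := hq
    rw [Real.norm_eq_abs, abs_le]; constructor <;> linarith
  refine ⟨?_, by linarith⟩
  rw [← integral_sub hF hG, ← integral_sub h2 h1]
  congr 1
  funext q
  have key : ∀ a : ℝ, max a 0 - max (-a) 0 = a := by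
    intro a
    rcases le_total a 0 with h | h
    · rw [max_eq_right h, max_eq_left (by linarith)]; ring
    · rw [max_eq_left h, max_eq_right (by linarith)]; ring
  have e1 := key (q.2 - 1/2)
  have e2 := key (q.1 - 1/2)
  simp only [neg_sub] at e1 e2
  linarith
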